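/- Let G be an (n−4)-DVDR graph on n vertices. Then D_max(G) = n+1 and D_max(G) − λ₁(G) = (n+2−√(n²+4n−4))/2. -/

import Mathlib

open SimpleGraph Matrix Finset BigOperators

/-- The distance matrix of a graph on `Fin n`, with real entries `d(u,v)`. -/
noncomputable def distMatrix {n : ℕ} (G : SimpleGraph (Fin n)) : Matrix (Fin n) (Fin n) ℝ :=
  fun u v => (G.dist u v : ℝ)

lemma distMatrix_isHermitian {n : ℕ} (G : SimpleGraph (Fin n)) :
    (distMatrix G).IsHermitian := by
  unfold Matrix.IsHermitian
  ext u v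
  simp [distMatrix, Matrix.conjTranspose_apply, SimpleGraph.dist_comm]

/-- The distance spectral radius: the largest eigenvalue of the distance matrix. -/
noncomputable def lambda1 {n : ℕ} (G : SimpleGraph (Fin n)) : ℝ :=
  ⨆ i, (distMatrix_isHermitian G).eigenvalues i

/-- The transmission of a vertex: the sum of distances to all other vertices. -/
noncomputable def transmission {n : ℕ} (G : SimpleGraph (Fin n)) (v : Fin n) : ℕ :=
  ∑ u, G.dist v u

/-- The maximum transmission. -/
noncomputable def Dmax {n : ℕ} (G : SimpleGraph (Fin n)) : ℕ :=
  Finset.univ.sup (transmission G)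

/-- The minimum transmission. -/
noncomputable def Dmin {n : ℕ} (G : SimpleGraph (Fin n)) : ℕ :=
  sInf (Set.range (transmission G))

/-- The Wiener index: half the sum of all transmissions. -/
noncomputable def wiener {n : ℕ} (G : SimpleGraph (Fin n)) : ℝ :=
  (∑ v, (transmission G v : ℝ)) / 2

/-- `G` is an `r`-DVDR graph: `G` is connected and has a (distinguished) vertex `v`
of degree `n-1` such that `G - v` is `r`-regular. -/
def IsDVDR {n : ℕ} (G : SimpleGraph (Fin n)) (r : ℕ) : Prop :=
  G.Connected ∧ ∃ v : Fin n,
    (G.neighborSet v).ncard = n - 1 ∧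
    ∀ w : ({v}ᶜ : Set (Fin n)), ((G.induce {v}ᶜ).neighborSet w).ncard = r

section Aux

open SimpleGraph Matrix Finset BigOperators

lemma spec_eq (n : ℕ) (hn : 0 < n) (A : Matrix (Fin n) (Fin n) ℝ) (hA : A.IsHermitian)
    (hnn : ∀ i j, 0 ≤ A i j) (x : Fin n → ℝ) (hx : ∀ i, 0 < x i) (μ : ℝ)
    (hμ : A *ᵥ x = μ • x) : (⨆ i, hA.eigenvalues i) = μ := by
  haveI : Nonempty (Fin n) := ⟨⟨0, hn⟩⟩
  -- the max-ratio bound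
  have key : ∀ (lam : ℝ) (y : Fin n → ℝ), y ≠ 0 → A *ᵥ y = lam • y → lam ≤ μ := by
    intro lam y hy hAy
    obtain ⟨i₀, -, hi₀⟩ := Finset.exists_max_image Finset.univ (fun i => |y i| / x i)
      ⟨Classical.arbitrary _, Finset.mem_univ _⟩
    set c := |y i₀| / x i₀ with hc
    have hcx : ∀ j, |y j| ≤ c * x j := by
      intro j
      have := hi₀ j (Finset.mem_univ j)
      exact (div_le_iff₀ (hx j)).mp this
    have hc0 : 0 < c := by
      obtain ⟨j, hj⟩ := Function.ne_iff.1 hy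
      have h1 : 0 < |y j| / x j := div_pos (abs_pos.2 hj) (hx j)
      exact lt_of_lt_of_le h1 (hi₀ j (Finset.mem_univ j))
    have hyi₀ : |y i₀| = c * x i₀ := by
      rw [hc, div_mul_cancel₀ _ (ne_of_gt (hx i₀))]
    have hmain : |lam| * (c * x i₀) ≤ c * (μ * x i₀) := by
      calc |lam| * (c * x i₀) = |lam| * |y i₀| := by rw [hyi₀]
        _ = |lam * y i₀| := (abs_mul _ _).symm
        _ = |(A *ᵥ y) i₀| := by rw [hAy]; simp
        _ = |∑ j, A i₀ j * y j| := by rw [Matrix.mulVec, dotProduct]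
        _ ≤ ∑ j, |A i₀ j * y j| := Finset.abs_sum_le_sum_abs _ _
        _ ≤ ∑ j, A i₀ j * (c * x j) := by
            apply Finset.sum_le_sum
            intro j _
            rw [abs_mul, abs_of_nonneg (hnn i₀ j)]
            exact mul_le_mul_of_nonneg_left (hcx j) (hnn i₀ j)
        _ = c * ∑ j, A i₀ j * x j := by rw [Finset.mul_sum]; congr 1; ext j; ring
        _ = c * ((A *ᵥ x) i₀) := by rw [Matrix.mulVec, dotProduct]
        _ = c * (μ * x i₀) := by rw [hμ]; simp
    have hlam : |lam| ≤ μ := by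
      have hpos : 0 < c * x i₀ := mul_pos hc0 (hx i₀)
      nlinarith
    exact le_trans (le_abs_self lam) hlam
  -- upper bound for each eigenvalue
  have hub : ∀ i, hA.eigenvalues i ≤ μ := by
    intro i
    apply key _ ⇑(hA.eigenvectorBasis i)
    · intro h0
      have : hA.eigenvectorBasis i = 0 := by
        ext j
        exact congrFun h0 j
      exact hA.eigenvectorBasis.toBasis.ne_zero i (by simpa using this)
    · exact hA.mulVec_eigenvectorBasis i
  -- μ is an eigenvalue
  have hex : ∃ i, hA.eigenvalues i = μ := by
    have hx0 : x ≠ 0 := fun h => absurd (congrFun h ⟨0, hn⟩) (ne_of_gt (hx ⟨0, hn⟩))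
    have hdet : (A - μ • (1 : Matrix (Fin n) (Fin n) ℝ)).det = 0 := by
      rw [← Matrix.exists_mulVec_eq_zero_iff]
      refine ⟨x, hx0, ?_⟩
      rw [Matrix.sub_mulVec, Matrix.smul_mulVec, Matrix.one_mulVec, hμ, sub_self]
    have hsm : (μ • (1 : Matrix (Fin n) (Fin n) ℝ)) = Matrix.diagonal (fun _ => μ) := by
      ext i j
      by_cases h : i = j <;> simp [Matrix.one_apply, h]
    set U : Matrix (Fin n) (Fin n) ℝ :=
      (Matrix.IsHermitian.eigenvectorUnitary hA : Matrix (Fin n) (Fin n) ℝ)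
    have hU1 : U * star U = 1 :=
      Matrix.mem_unitaryGroup_iff.mp (Matrix.IsHermitian.eigenvectorUnitary hA).2
    have hsp : A = U * Matrix.diagonal hA.eigenvalues * star U := by
      have := hA.spectral_theorem
      simpa using this
    have hfac : A - μ • 1 = U * (Matrix.diagonal (fun i => hA.eigenvalues i - μ)) * star U := by
      have : Matrix.diagonal (fun i => hA.eigenvalues i - μ)
          = Matrix.diagonal hA.eigenvalues - Matrix.diagonal (fun _ => μ) := by
        rw [Matrix.diagonal_sub]
      rw [this, Matrix.mul_sub, Matrix.sub_mul, ← hsp, hsm]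
      congr 1
      rw [← hsm, Matrix.mul_smul, Matrix.mul_one, Matrix.smul_mul, hU1]
    rw [hfac] at hdet
    rw [Matrix.det_mul, Matrix.det_mul] at hdet
    have hdetU : U.det * (star U).det = 1 := by
      rw [← Matrix.det_mul, hU1, Matrix.det_one]
    have hdiag : (Matrix.diagonal (fun i => hA.eigenvalues i - μ)).det = 0 := by
      have h0 : U.det * (Matrix.diagonal (fun i => hA.eigenvalues i - μ)).det * (star U).det = 0 :=
        hdet
      by_contra h
      have h1 : U.det ≠ 0 := by
        intro h2; rw [h2, zero_mul] at hdetU; exact one_ne_zero hdetU.symm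
      have h2 : (star U).det ≠ 0 := by
        intro h2; rw [h2, mul_zero] at hdetU; exact one_ne_zero hdetU.symm
      exact (mul_ne_zero (mul_ne_zero h1 h) h2) h0
    rw [Matrix.det_diagonal] at hdiag
    obtain ⟨i, -, hi⟩ := Finset.prod_eq_zero_iff.mp hdiag
    exact ⟨i, by linarith [sub_eq_zero.mp hi]⟩
  obtain ⟨i₀, hi₀⟩ := hex
  apply le_antisymm
  · exact ciSup_le hub
  · rw [← hi₀]
    exact le_ciSup (Set.Finite.bddAbove (Set.finite_range _)) i₀

end Aux


theorem stmt3 (n : ℕ) (hn : 4 ≤ n) (G : SimpleGraph (Fin n)) (hG : IsDVDR G (n - 4)) :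
    Dmax G = n + 1 ∧
    (Dmax G : ℝ) - lambda1 G =
      ((n : ℝ) + 2 - Real.sqrt ((n : ℝ) ^ 2 + 4 * n - 4)) / 2 := by
  classical
  obtain ⟨hconn, v, hv, hreg⟩ := hG
  -- v is adjacent to everything else
  have hvadj : ∀ u, u ≠ v → G.Adj v u := by
    have hsub : G.neighborSet v ⊆ {v}ᶜ := by
      intro w hw
      simp only [Set.mem_compl_iff, Set.mem_singleton_iff]
      rintro rfl
      exact G.irrefl hw
    have hcard : ({v}ᶜ : Set (Fin n)).ncard = n - 1 := by
      rw [Set.ncard_eq_toFinset_card']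
      simp [Finset.card_compl]
    have heq : G.neighborSet v = {v}ᶜ :=
      Set.eq_of_subset_of_ncard_le hsub (by rw [hcard, hv]) (Set.toFinite _)
    intro u hu
    have : u ∈ G.neighborSet v := heq ▸ (by simp [hu])
    exact this
  -- degrees of the other vertices
  have hdeg : ∀ u, u ≠ v → (G.neighborSet u).ncard = n - 3 := by
    intro u hu
    have hu' : u ∈ ({v}ᶜ : Set (Fin n)) := by simp [hu]
    have key : G.neighborSet u =
        insert v (Subtype.val '' ((G.induce {v}ᶜ).neighborSet ⟨u, hu'⟩)) := by
      ext w
      simp only [mem_neighborSet, Set.mem_insert_iff, Set.mem_image]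
      constructor
      · intro hadj
        by_cases hwv : w = v
        · exact Or.inl hwv
        · exact Or.inr ⟨⟨w, by simp [hwv]⟩, by simpa using hadj, rfl⟩
      · rintro (rfl | ⟨x, hx, rfl⟩)
        · exact (hvadj u hu).symm
        · simpa using hx
    have hvnot : v ∉ Subtype.val '' ((G.induce {v}ᶜ).neighborSet ⟨u, hu'⟩) := by
      rintro ⟨x, -, hxv⟩
      exact x.2 (by simp [hxv])
    rw [key, Set.ncard_insert_of_notMem hvnot (Set.toFinite _),
      Set.ncard_image_of_injective _ Subtype.val_injective, hreg ⟨u, hu'⟩]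
    omega
  have hdegf : ∀ u, u ≠ v → (Finset.univ.filter (fun w => G.Adj u w)).card = n - 3 := by
    intro u hu
    rw [← hdeg u hu, Set.ncard_eq_toFinset_card']
    congr 1
    ext w
    rw [Set.mem_toFinset]; simp
  -- distance formula
  have hdist : ∀ u w, (G.dist u w : ℕ) = if u = w then 0 else if G.Adj u w then 1 else 2 := by
    intro u w
    by_cases huw : u = w
    · simp [huw]
    · rw [if_neg huw]
      by_cases hadj : G.Adj u w
      · rw [if_pos hadj, SimpleGraph.dist_eq_one_iff_adj.2 hadj]
      · rw [if_neg hadj]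
        have huv : u ≠ v := fun h => hadj (h ▸ hvadj w (fun hw => huw (h.trans hw.symm)))
        have hwv : w ≠ v := fun h => hadj (h ▸ (hvadj u (h ▸ huv)).symm)
        have hle : G.dist u w ≤ 2 := by
          have := SimpleGraph.dist_le (((hvadj u huv).symm.toWalk).append (hvadj w hwv).toWalk)
          simpa using this
        have h0 : G.dist u w ≠ 0 := by
          rw [Ne, hconn.dist_eq_zero_iff]; exact huw
        have h1 : G.dist u w ≠ 1 := fun h => hadj (SimpleGraph.dist_eq_one_iff_adj.1 h)
        omega
  -- transmissions
  have hTu : ∀ u, u ≠ v → transmission G u = n + 1 := by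
    intro u hu
    unfold transmission
    rw [← Finset.add_sum_erase _ _ (Finset.mem_univ u)]
    rw [hdist u u, if_pos rfl, zero_add]
    rw [← Finset.sum_filter_add_sum_filter_not (Finset.univ.erase u) (fun w => G.Adj u w)]
    have he1 : (Finset.univ.erase u).filter (fun w => G.Adj u w)
        = Finset.univ.filter (fun w => G.Adj u w) := by
      ext w
      simp only [Finset.mem_filter, Finset.mem_erase, Finset.mem_univ, true_and, and_true]
      exact and_iff_right_iff_imp.2 (fun h => (G.ne_of_adj h).symm)
    have hc1 : ((Finset.univ.erase u).filter (fun w => G.Adj u w)).card = n - 3 := by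
      rw [he1]; exact hdegf u hu
    have hc2 : ((Finset.univ.erase u).filter (fun w => ¬ G.Adj u w)).card = 2 := by
      have := Finset.card_filter_add_card_filter_not (s := Finset.univ.erase u)
        (p := fun w => G.Adj u w)
      rw [hc1, Finset.card_erase_of_mem (Finset.mem_univ u), Finset.card_univ,
        Fintype.card_fin] at this
      omega
    have hs1 : ∑ w ∈ (Finset.univ.erase u).filter (fun w => G.Adj u w), G.dist u w = n - 3 := by
      rw [← hc1, Finset.card_eq_sum_ones]
      apply Finset.sum_congr rfl
      intro w hw
      simp only [Finset.mem_filter, Finset.mem_erase] at hw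
      rw [hdist, if_neg (fun h => hw.1.1 h.symm), if_pos hw.2]
    have hs2 : ∑ w ∈ (Finset.univ.erase u).filter (fun w => ¬ G.Adj u w), G.dist u w = 4 := by
      have heq2 : ∑ w ∈ (Finset.univ.erase u).filter (fun w => ¬ G.Adj u w), G.dist u w
          = ∑ _w ∈ (Finset.univ.erase u).filter (fun w => ¬ G.Adj u w), 2 := by
        apply Finset.sum_congr rfl
        intro w hw
        simp only [Finset.mem_filter, Finset.mem_erase] at hw
        rw [hdist, if_neg (fun h => hw.1.1 h.symm), if_neg hw.2]
      rw [heq2, Finset.sum_const, hc2]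
      rfl
    rw [hs1, hs2]; omega
  have hTv : transmission G v = n - 1 := by
    unfold transmission
    rw [← Finset.add_sum_erase _ _ (Finset.mem_univ v)]
    rw [hdist v v, if_pos rfl, zero_add]
    have heq1 : ∑ w ∈ Finset.univ.erase v, G.dist v w = ∑ _w ∈ Finset.univ.erase v, 1 := by
      apply Finset.sum_congr rfl
      intro w hw
      simp only [Finset.mem_erase] at hw
      rw [hdist, if_neg (fun h => hw.1 h.symm), if_pos (hvadj w hw.1)]
    rw [heq1, Finset.sum_const, Finset.card_erase_of_mem (Finset.mem_univ v),
      Finset.card_univ, Fintype.card_fin, smul_eq_mul, mul_one]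
  -- Dmax
  haveI : Nontrivial (Fin n) := Fin.nontrivial_iff_two_le.2 (by omega)
  obtain ⟨u₀, hu₀⟩ := exists_ne v
  have hDmax : Dmax G = n + 1 := by
    apply le_antisymm
    · apply Finset.sup_le
      intro u _
      by_cases hu : u = v
      · rw [hu, hTv]; omega
      · rw [hTu u hu]
    · rw [← hTu u₀ hu₀]
      exact Finset.le_sup (Finset.mem_univ u₀)
  refine ⟨hDmax, ?_⟩
  -- spectral part
  set s : ℝ := Real.sqrt ((n : ℝ) ^ 2 + 4 * n - 4) with hs
  have hnr : (4 : ℝ) ≤ (n : ℝ) := by exact_mod_cast hn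
  have ht0 : (0 : ℝ) ≤ (n : ℝ) ^ 2 + 4 * n - 4 := by nlinarith
  have hs0 : 0 ≤ s := Real.sqrt_nonneg _
  have hs2 : s ^ 2 = (n : ℝ) ^ 2 + 4 * n - 4 := Real.sq_sqrt ht0
  have hsn : (n : ℝ) < s := by nlinarith
  set μ : ℝ := ((n : ℝ) + s) / 2 with hμdef
  have hμn : (n : ℝ) < μ := by
    rw [hμdef]; linarith
  set x : Fin n → ℝ := fun i => if i = v then μ - (n : ℝ) else 1 with hx
  have hxpos : ∀ i, 0 < x i := by
    intro i
    rw [hx]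
    by_cases h : i = v <;> simp [h] <;> linarith
  have hduv : ∀ u, u ≠ v → (G.dist u v : ℝ) = 1 := by
    intro u hu
    rw [hdist u v, if_neg hu, if_pos (hvadj u hu).symm]
    norm_num
  have hTreal : ∀ u, ∑ j, (G.dist u j : ℝ) = (transmission G u : ℝ) := by
    intro u
    rw [transmission]
    push_cast
    rfl
  have hrow : ∀ u, ∑ j, (G.dist u j : ℝ) * x j
      = (transmission G u : ℝ) + (G.dist u v : ℝ) * (μ - (n : ℝ) - 1) := by
    intro u
    have hsplit : ∀ j, (G.dist u j : ℝ) * x j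
        = (G.dist u j : ℝ) + (if j = v then (G.dist u j : ℝ) * (μ - (n : ℝ) - 1) else 0) := by
      intro j
      rw [hx]
      by_cases h : j = v <;> simp [h] <;> ring
    rw [Finset.sum_congr rfl (fun j _ => hsplit j), Finset.sum_add_distrib, hTreal,
      Finset.sum_ite_eq' Finset.univ v (fun j => (G.dist u j : ℝ) * (μ - (n:ℝ) - 1))]
    simp
  have heig : distMatrix G *ᵥ x = μ • x := by
    funext i
    have hmv : (distMatrix G *ᵥ x) i = ∑ j, (G.dist i j : ℝ) * x j := by
      rw [Matrix.mulVec, dotProduct]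
      rfl
    by_cases hiv : i = v
    · subst hiv
      rw [hmv, hrow, hTv]
      have hdv : (G.dist i i : ℝ) = 0 := by
        rw [hdist i i, if_pos rfl]; norm_num
      rw [hdv]
      have hxv : x i = μ - (n : ℝ) := by rw [hx]; simp
      rw [Pi.smul_apply, hxv, smul_eq_mul]
      have hcast : ((n - 1 : ℕ) : ℝ) = (n : ℝ) - 1 := by
        have : (1 : ℕ) ≤ n := by omega
        push_cast [this]
        ring
      rw [hcast]
      rw [hμdef]
      have : ((n:ℝ) + s) / 2 * (((n:ℝ) + s) / 2 - (n:ℝ)) = (s^2 - (n:ℝ)^2)/4 := by ring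
      rw [this, hs2]
      ring
    · rw [hmv, hrow, hTu i hiv, hduv i hiv]
      have hxi : x i = 1 := by rw [hx]; simp [hiv]
      rw [Pi.smul_apply, hxi, smul_eq_mul, mul_one]
      push_cast
      ring
  have hnn : ∀ i j, 0 ≤ distMatrix G i j := by
    intro i j
    exact Nat.cast_nonneg _
  have hlam : lambda1 G = μ :=
    spec_eq n (by omega) (distMatrix G) (distMatrix_isHermitian G) hnn x hxpos μ heig
  rw [hDmax, hlam, hμdef]
  push_cast
  ring
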